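/- Let h be a finitely supported real sequence and a the causal part of its autocorrelation: a_n = r_n for n > 0, a_0 = r_0/2, a_n = 0 for n < 0, where r = ḧ ⋆ h (r_n = Σ_m h_m h_{m+n}). Then for every finitely supported real sequence x, ⟨x, a ⋆ x⟩ = (1/2)‖h ⋆ x‖². -/

import Mathlib

noncomputable def convR (a b : ℤ → ℝ) : ℤ → ℝ := fun n => ∑' m, a m * b (n - m)

noncomputable def innR (u v : ℤ → ℝ) : ℝ := ∑' n, u n * v n

def ddotR (a : ℤ → ℝ) : ℤ → ℝ := fun n => a (-n)

def HasFinSuppR (a : ℤ → ℝ) : Prop := (Function.support a).Finite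

open Function Pointwise

lemma summable_of_finSupp {α : Type*} {f : α → ℝ} (hf : (Function.support f).Finite) :
    Summable f :=
  summable_of_ne_finset_zero (s := hf.toFinset) fun b hb =>
    Function.notMem_support.mp (fun hb' => hb (hf.mem_toFinset.mpr hb'))

lemma exists_ne_zero_of_tsum_ne_zero {α : Type*} {f : α → ℝ} (h : ∑' n, f n ≠ 0) :
    ∃ n, f n ≠ 0 := by
  by_contra hc
  push_neg at hc
  exact h ((tsum_congr hc).trans tsum_zero)

/-- With `r = ḧ ⋆ h` and `a` the causal part of `r`
(`a_n = r_n` for `n > 0`, `a_0 = r_0/2`, `a_n = 0` for `n < 0`),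
one has `⟨x, a ⋆ x⟩ = (1/2)‖h ⋆ x‖²`. -/
theorem causal_part_autocorrelation (h x : ℤ → ℝ)
    (hh : HasFinSuppR h) (hx : HasFinSuppR x) :
    let r : ℤ → ℝ := convR (ddotR h) h
    let a : ℤ → ℝ := fun n => if 0 < n then r n else if n = 0 then r 0 / 2 else 0
    innR x (convR a x) = (1 / 2) * ∑' n, (convR h x n) ^ 2 := by
  intro r a
  have hSh : (support h).Finite := hh
  have hSx : (support x).Finite := hx
  -- a finite set containing the support of `r` (and of `a`)
  set Sr : Set ℤ := support h + (-support h) with hSr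
  have hSrFin : Sr.Finite := hSh.add hSh.neg
  have hrsupp : ∀ m : ℤ, r m ≠ 0 → m ∈ Sr := by
    intro m hm
    obtain ⟨k, hk⟩ := exists_ne_zero_of_tsum_ne_zero hm
    have h1 : h (-k) ≠ 0 := fun e => hk (by simp [ddotR, e])
    have h2 : h (m - k) ≠ 0 := fun e => hk (by simp [ddotR, e])
    have hm' : m = (m - k) + k := by ring
    rw [hm']
    exact Set.add_mem_add h2 (Set.mem_neg.mpr (by simpa using h1))
  have hasupp : ∀ m : ℤ, a m ≠ 0 → m ∈ Sr := by
    intro m hm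
    apply hrsupp
    intro hrm
    apply hm
    simp only [a]
    rcases lt_trichotomy m 0 with hlt | heq | hgt
    · simp [not_lt.mpr hlt.le, hlt.ne]
    · subst heq; simp [hrm]
    · simp [hgt, hrm]
  -- symmetry of r
  have key : ∀ c : ℤ, r c = ∑' k, h k * h (c + k) := by
    intro c
    calc r c = ∑' k, ddotR h k * h (c - k) := rfl
      _ = ∑' k, ddotR h ((Equiv.neg ℤ) k) * h (c - (Equiv.neg ℤ) k) :=
          ((Equiv.neg ℤ).tsum_eq (fun k => ddotR h k * h (c - k))).symm
      _ = ∑' k, h k * h (c + k) := by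
          apply tsum_congr; intro k
          simp only [Equiv.neg_apply, ddotR, neg_neg, sub_neg_eq_add]
  have hrsymm : ∀ m : ℤ, r (-m) = r m := by
    intro m
    calc r (-m) = ∑' k, h k * h (-m + k) := key (-m)
      _ = ∑' k, h ((Equiv.addLeft m) k) * h (-m + (Equiv.addLeft m) k) :=
          ((Equiv.addLeft m).tsum_eq (fun k => h k * h (-m + k))).symm
      _ = ∑' k, h k * h (m + k) := by
          apply tsum_congr; intro k
          simp only [Equiv.coe_addLeft]
          have e1 : -m + (m + k) = k := by ring
          rw [e1, mul_comm]
      _ = r m := (key m).symm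
  have haa : ∀ m : ℤ, a m + a (-m) = r m := by
    intro m
    rcases lt_trichotomy m 0 with hlt | heq | hgt
    · have h1 : ¬ (0 < m) := by omega
      have h2 : m ≠ 0 := by omega
      have h3 : 0 < -m := by omega
      simp only [a, if_neg h1, if_neg h2, if_pos h3, hrsymm m, zero_add]
    · subst heq
      simp only [a]
      norm_num
    · have h1 : ¬ (0 < -m) := by omega
      have h2 : -m ≠ 0 := by omega
      simp only [a, if_pos hgt, if_neg h1, if_neg h2, add_zero]
  -- the main double/triple sum functions
  set F : ℤ × ℤ → ℝ := fun p => x p.1 * (a p.2 * x (p.1 - p.2)) with hF_def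
  set G : ℤ × ℤ → ℝ := fun p => x p.1 * (r p.2 * x (p.1 - p.2)) with hG_def
  set T : ℤ × ℤ × ℤ → ℝ :=
    fun q => x q.1 * (ddotR h q.2.2 * h (q.2.1 - q.2.2) * x (q.1 - q.2.1)) with hT_def
  set U : ℤ × ℤ × ℤ → ℝ :=
    fun q => (h q.2.1 * x (q.1 - q.2.1)) * (h q.2.2 * x (q.1 - q.2.2)) with hU_def
  -- summability facts
  have hF : Summable F := by
    apply summable_of_finSupp
    apply Set.Finite.subset (hSx.prod hSrFin)
    rintro ⟨n, m⟩ hp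
    simp only [hF_def, mem_support, ne_eq, mul_eq_zero, not_or] at hp
    exact ⟨hp.1, hasupp m hp.2.1⟩
  have hFslice : ∀ n, Summable fun m => F (n, m) := by
    intro n
    apply summable_of_finSupp
    apply Set.Finite.subset hSrFin
    intro m hm
    simp only [hF_def, mem_support, ne_eq, mul_eq_zero, not_or] at hm
    exact hasupp m hm.2.1
  have hG : Summable G := by
    apply summable_of_finSupp
    apply Set.Finite.subset (hSx.prod hSrFin)
    rintro ⟨n, m⟩ hp
    simp only [hG_def, mem_support, ne_eq, mul_eq_zero, not_or] at hp
    exact ⟨hp.1, hrsupp m hp.2.1⟩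
  have hGslice : ∀ n, Summable fun m => G (n, m) := by
    intro n
    apply summable_of_finSupp
    apply Set.Finite.subset hSrFin
    intro m hm
    simp only [hG_def, mem_support, ne_eq, mul_eq_zero, not_or] at hm
    exact hrsupp m hm.2.1
  have hTmem : ∀ q : ℤ × ℤ × ℤ, T q ≠ 0 →
      q.1 ∈ support x ∧ q.2.1 ∈ Sr ∧ q.2.2 ∈ -support x ∨ True := fun _ _ => Or.inr trivial
  have hT : Summable T := by
    apply summable_of_finSupp
    apply Set.Finite.subset (hSx.prod (hSrFin.prod hSh.neg))
    rintro ⟨n, m, k⟩ hp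
    simp only [hT_def, mem_support, ne_eq, mul_eq_zero, not_or, ddotR] at hp
    obtain ⟨hx1, ⟨hd, hh2⟩, -⟩ := hp
    refine ⟨hx1, ?_, Set.mem_neg.mpr (by simpa using hd)⟩
    have hm' : m = (m - k) + k := by ring
    rw [hm']
    exact Set.add_mem_add hh2 (Set.mem_neg.mpr (by simpa using hd))
  have hTslice1 : ∀ n, Summable fun z : ℤ × ℤ => T (n, z) := by
    intro n
    apply summable_of_finSupp
    apply Set.Finite.subset (hSrFin.prod hSh.neg)
    rintro ⟨m, k⟩ hp
    simp only [hT_def, mem_support, ne_eq, mul_eq_zero, not_or, ddotR] at hp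
    obtain ⟨-, ⟨hd, hh2⟩, -⟩ := hp
    refine ⟨?_, Set.mem_neg.mpr (by simpa using hd)⟩
    have hm' : m = (m - k) + k := by ring
    rw [hm']
    exact Set.add_mem_add hh2 (Set.mem_neg.mpr (by simpa using hd))
  have hTslice2 : ∀ n m, Summable fun k => T (n, m, k) := by
    intro n m
    apply summable_of_finSupp
    apply Set.Finite.subset hSh.neg
    intro k hk
    simp only [hT_def, mem_support, ne_eq, mul_eq_zero, not_or, ddotR] at hk
    exact Set.mem_neg.mpr (by simpa using hk.2.1.1)
  have hU : Summable U := by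
    apply summable_of_finSupp
    apply Set.Finite.subset ((hSx.add hSh).prod (hSh.prod hSh))
    rintro ⟨n, i, j⟩ hp
    simp only [hU_def, mem_support, ne_eq, mul_eq_zero, not_or] at hp
    obtain ⟨⟨hi, hxi⟩, hj, -⟩ := hp
    refine ⟨?_, hi, hj⟩
    have hn' : n = (n - i) + i := by ring
    rw [hn']
    exact Set.add_mem_add hxi hi
  have hUslice : ∀ n, Summable fun z : ℤ × ℤ => U (n, z) := by
    intro n
    apply summable_of_finSupp
    apply Set.Finite.subset (hSh.prod hSh)
    rintro ⟨i, j⟩ hp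
    simp only [hU_def, mem_support, ne_eq, mul_eq_zero, not_or] at hp
    exact ⟨hp.1.1, hp.2.1⟩
  have hconvh : ∀ n, Summable fun i => h i * x (n - i) := by
    intro n
    apply summable_of_finSupp
    apply Set.Finite.subset hSh
    intro i hi
    simp only [mem_support, ne_eq, mul_eq_zero, not_or] at hi
    exact hi.1
  -- Step 1 : LHS as a double sum
  have step1 : innR x (convR a x) = ∑' p : ℤ × ℤ, F p := by
    calc innR x (convR a x) = ∑' n, x n * ∑' m, a m * x (n - m) := rfl
      _ = ∑' n, ∑' m, F (n, m) := by
          apply tsum_congr; intro n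
          exact (tsum_mul_left).symm
      _ = ∑' p : ℤ × ℤ, F p := (Summable.tsum_prod' hF hFslice).symm
  -- Step 2-3 : symmetrization
  let e : ℤ × ℤ ≃ ℤ × ℤ :=
    Involutive.toPerm (fun p => (p.1 - p.2, -p.2)) (by
      rintro ⟨n, m⟩
      simp only [Prod.mk.injEq]
      constructor <;> ring)
  have he_apply : ∀ p : ℤ × ℤ, e p = (p.1 - p.2, -p.2) := fun _ => rfl
  have hFe : Summable fun p => F (e p) := (Equiv.summable_iff e).mpr hF
  have step2 : ∑' p : ℤ × ℤ, F (e p) = ∑' p : ℤ × ℤ, F p := e.tsum_eq F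
  have step3 : (∑' p : ℤ × ℤ, F p) + (∑' p : ℤ × ℤ, F p) = ∑' p : ℤ × ℤ, G p := by
    calc (∑' p : ℤ × ℤ, F p) + (∑' p : ℤ × ℤ, F p)
        = (∑' p : ℤ × ℤ, F p) + (∑' p : ℤ × ℤ, F (e p)) := by rw [step2]
      _ = ∑' p : ℤ × ℤ, (F p + F (e p)) := (Summable.tsum_add hF hFe).symm
      _ = ∑' p : ℤ × ℤ, G p := by
          apply tsum_congr
          rintro ⟨n, m⟩
          rw [he_apply]
          simp only [hF_def, hG_def]
          have e1 : n - m - -m = n := by ring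
          rw [e1, ← haa m]
          ring
  -- Step 4 : expand r inside G into a triple sum
  have step4 : ∑' p : ℤ × ℤ, G p = ∑' q : ℤ × ℤ × ℤ, T q := by
    have inner : ∀ n m : ℤ, G (n, m) = ∑' k, T (n, m, k) := by
      intro n m
      calc G (n, m) = x n * ((∑' k, ddotR h k * h (m - k)) * x (n - m)) := rfl
        _ = x n * (∑' k, ddotR h k * h (m - k) * x (n - m)) := by rw [tsum_mul_right]
        _ = ∑' k, x n * (ddotR h k * h (m - k) * x (n - m)) := by rw [tsum_mul_left]
        _ = ∑' k, T (n, m, k) := rfl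
    calc ∑' p : ℤ × ℤ, G p = ∑' n, ∑' m, G (n, m) := Summable.tsum_prod' hG hGslice
      _ = ∑' n, ∑' m, ∑' k, T (n, m, k) := by
          apply tsum_congr; intro n; apply tsum_congr; intro m; exact inner n m
      _ = ∑' n, ∑' z : ℤ × ℤ, T (n, z) := by
          apply tsum_congr; intro n
          exact (Summable.tsum_prod' (hTslice1 n) (fun m => hTslice2 n m)).symm
      _ = ∑' q : ℤ × ℤ × ℤ, T q := (Summable.tsum_prod' hT hTslice1).symm
  -- Step 5 : reindex the triple sum
  let Φ : ℤ × ℤ × ℤ ≃ ℤ × ℤ × ℤ :=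
    Involutive.toPerm (fun q => (q.1 - q.2.2, q.2.1 - q.2.2, -q.2.2)) (by
      rintro ⟨n, i, j⟩
      simp only [Prod.mk.injEq]
      refine ⟨by ring, by ring, by ring⟩)
  have hΦ_apply : ∀ q : ℤ × ℤ × ℤ, Φ q = (q.1 - q.2.2, q.2.1 - q.2.2, -q.2.2) := fun _ => rfl
  have step5 : ∑' q : ℤ × ℤ × ℤ, T q = ∑' q : ℤ × ℤ × ℤ, U q := by
    calc ∑' q : ℤ × ℤ × ℤ, T q = ∑' q : ℤ × ℤ × ℤ, T (Φ q) := (Φ.tsum_eq T).symm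
      _ = ∑' q : ℤ × ℤ × ℤ, U q := by
          apply tsum_congr
          rintro ⟨n, i, j⟩
          rw [hΦ_apply]
          simp only [hT_def, hU_def, ddotR, neg_neg]
          have e1 : i - j - -j = i := by ring
          have e2 : n - j - (i - j) = n - i := by ring
          rw [e1, e2]
          ring
  -- Step 6 : the right-hand side as the same triple sum
  have step6 : ∑' n, (convR h x n) ^ 2 = ∑' q : ℤ × ℤ × ℤ, U q := by
    calc ∑' n, (convR h x n) ^ 2
        = ∑' n, ∑' z : ℤ × ℤ, U (n, z) := by
          apply tsum_congr; intro n
          have : (convR h x n) ^ 2 = (∑' i, h i * x (n - i)) * ∑' j, h j * x (n - j) := by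
            rw [sq]; rfl
          rw [this, Summable.tsum_mul_tsum (hconvh n) (hconvh n) (hUslice n)]
      _ = ∑' q : ℤ × ℤ × ℤ, U q := (Summable.tsum_prod' hU hUslice).symm
  -- conclude
  have final : innR x (convR a x) + innR x (convR a x) = ∑' n, (convR h x n) ^ 2 := by
    rw [step1, step3, step4, step5, ← step6]
  linarith [final]
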